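/- A connected mixed multigraph M can be obtained from its underlying graph G(M) by a three-way switching (i.e., there is a diagonal matrix D with diagonal entries in {ω^i : 0 ≤ i ≤ 5} with N(M) = D^{-1} N(G(M)) D) if and only if M is positive, i.e., every mixed cycle of M has weight 1. -/

import Mathlib

open Complex Finset

noncomputable section

/-- The primitive sixth root of unity `ω = 1/2 + (√3/2)i`. -/
def omega6 : ℂ := ⟨1/2, Real.sqrt 3 / 2⟩

/-- A loopless undirected multigraph with vertex type `V` and edge type `E`:
each edge has a pair of distinct endpoints. -/
structure Multigraph (V E : Type) where
  ends : E → Sym2 V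
  loopless : ∀ e, ¬ (ends e).IsDiag

variable {V E : Type}

/-- A mixed multigraph with underlying multigraph `G`: each edge is either
unoriented (`none`) or oriented (`some (u, v)`, an arc from `u` to `v`),
the orientation is compatible with the endpoints, and there are no digons
(two parallel edges oriented in opposite directions). -/
structure MixedOrientation (G : Multigraph V E) where
  orient : E → Option (V × V)
  compat : ∀ e a b, orient e = some (a, b) → G.ends e = s(a, b)
  noDigon : ∀ e f a b, G.ends e = G.ends f → orient e = some (a, b) → orient f ≠ some (b, a)

/-- The underlying graph of `G`, viewed as the mixed multigraph with no oriented edges. -/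
def Multigraph.triv (G : Multigraph V E) : MixedOrientation G where
  orient := fun _ => none
  compat := fun _ _ _ h => by simp at h
  noDigon := fun _ _ _ _ _ h => by simp at h

variable [DecidableEq V]

/-- The contribution of edge `e`, traversed from `u` to `v`, to the Hermitian adjacency
matrix entry `N_{uv}` and to walk weights: `1` if `e` is unoriented, `ω` if `e` is an arc
from `u` to `v`, and `conj ω` if `e` is an arc from `v` to `u`. -/
def stepWeight {G : Multigraph V E} (M : MixedOrientation G) (e : E) (u v : V) : ℂ :=
  match M.orient e with
  | none => 1
  | some (a, _) => if a = u then omega6 else (starRingEnd ℂ) omega6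

/-- The Hermitian adjacency matrix `N(M)` of a mixed multigraph:
`N_{uv} = e{u,v} + e(u,v)·ω + e(v,u)·conj ω`. -/
def herm [Fintype V] [Fintype E] {G : Multigraph V E} (M : MixedOrientation G) :
    Matrix V V ℂ :=
  Matrix.of fun u v => ∑ e : E, if G.ends e = s(u, v) then stepWeight M e u v else 0

/-- A (mixed) cycle in the multigraph `G`: a cyclic sequence of `n ≥ 2` distinct vertices
joined by `n` distinct edges. -/
structure MixedCycle (G : Multigraph V E) where
  n : ℕ
  two_le : 2 ≤ n
  vert : ZMod n → V
  edge : ZMod n → E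
  vert_inj : Function.Injective vert
  edge_inj : Function.Injective edge
  ends_eq : ∀ i, G.ends (edge i) = s(vert i, vert (i + 1))

/-- The weight `wt(C) = ω^f · (conj ω)^b` of a mixed cycle `C` in `M`, traversed in
the direction given by its parametrization. -/
def cycleWeight {G : Multigraph V E} (M : MixedOrientation G) (C : MixedCycle G) : ℂ :=
  haveI : NeZero C.n := ⟨by have := C.two_le; omega⟩
  ∏ i : ZMod C.n, stepWeight M (C.edge i) (C.vert i) (C.vert (i + 1))

/-- The value `ν(C) = wt(C) + conj (wt(C))` of a mixed cycle. -/
def nu {G : Multigraph V E} (M : MixedOrientation G) (C : MixedCycle G) : ℂ :=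
  cycleWeight M C + (starRingEnd ℂ) (cycleWeight M C)

/-- The number of forward arcs of a mixed cycle (relative to its direction). -/
def fCount {G : Multigraph V E} (M : MixedOrientation G) (C : MixedCycle G) : ℕ :=
  haveI : NeZero C.n := ⟨by have := C.two_le; omega⟩
  (Finset.univ.filter fun i : ZMod C.n =>
    M.orient (C.edge i) = some (C.vert i, C.vert (i + 1))).card

/-- The number of backward arcs of a mixed cycle (relative to its direction). -/
def bCount {G : Multigraph V E} (M : MixedOrientation G) (C : MixedCycle G) : ℕ :=
  haveI : NeZero C.n := ⟨by have := C.two_le; omega⟩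
  (Finset.univ.filter fun i : ZMod C.n =>
    M.orient (C.edge i) = some (C.vert (i + 1), C.vert i)).card

/-- The edge set of a mixed cycle. -/
def cycleEdges [DecidableEq E] {G : Multigraph V E} (C : MixedCycle G) : Finset E :=
  haveI : NeZero C.n := ⟨by have := C.two_le; omega⟩
  Finset.image C.edge Finset.univ

/-- Reachability in `G` using only edges from the set `S`. -/
def ReachIn (G : Multigraph V E) (S : Set E) (u v : V) : Prop :=
  Relation.ReflTransGen (fun x y => ∃ e ∈ S, G.ends e = s(x, y)) u v

/-- A multigraph is connected if every two vertices are joined by a walk. -/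
def Multigraph.Connected (G : Multigraph V E) : Prop :=
  ∀ u v : V, ReachIn G Set.univ u v

/-- All entries of the diagonal `d` are sixth roots of unity `ω^i`, `0 ≤ i ≤ 5`. -/
def IsSixthRoots (d : V → ℂ) : Prop := ∀ v, ∃ i : ℕ, i ≤ 5 ∧ d v = omega6 ^ i

/-- `M''` is obtained from `M'` by a three-way switching: `N(M'') = D⁻¹ N(M') D` for
some diagonal matrix `D` whose diagonal entries are sixth roots of unity. -/
def Switching [Fintype V] [Fintype E] {G : Multigraph V E}
    (M' M'' : MixedOrientation G) : Prop :=
  ∃ d : V → ℂ, IsSixthRoots d ∧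
    herm M'' = (Matrix.diagonal d)⁻¹ * herm M' * Matrix.diagonal d

/-- `M'` is the converse of `M`: every arc of `M` is reversed. -/
def IsConverse {G : Multigraph V E} (M M' : MixedOrientation G) : Prop :=
  ∀ e, M'.orient e = Option.map Prod.swap (M.orient e)

/-- `M'` and `M''` are switching equivalent: one is obtained from the other by a
three-way switching and/or taking a converse. -/
def SwitchEquiv [Fintype V] [Fintype E] {G : Multigraph V E}
    (M' M'' : MixedOrientation G) : Prop :=
  Switching M' M'' ∨ ∃ Mc : MixedOrientation G, IsConverse M' Mc ∧ Switching Mc M''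

/-- `T` is (the edge set of) a spanning tree of `G`: it connects all vertices and
contains no cycle. -/
def IsSpanningTree (G : Multigraph V E) (T : Set E) : Prop :=
  (∀ u v : V, ReachIn G T u v) ∧ ∀ C : MixedCycle G, ¬ (∀ i, C.edge i ∈ T)

/-- `C` is a fundamental cycle with respect to the spanning tree `T`: it uses exactly
one non-tree edge. -/
def IsFundamentalCycle (G : Multigraph V E) (T : Set E) (C : MixedCycle G) : Prop :=
  ∃ e, e ∉ T ∧ ∀ i, C.edge i = e ∨ C.edge i ∈ T

/-! ### Auxiliary facts about `omega6` -/

lemma omega6_re : omega6.re = 1/2 := rfl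
lemma omega6_im : omega6.im = Real.sqrt 3 / 2 := rfl

lemma normSq_omega6 : Complex.normSq omega6 = 1 := by
  have h3 : Real.sqrt 3 * Real.sqrt 3 = 3 := Real.mul_self_sqrt (by norm_num)
  rw [Complex.normSq_apply, omega6_re, omega6_im]
  linear_combination h3 / 4

lemma omega6_mul_conj : omega6 * (starRingEnd ℂ) omega6 = 1 := by
  rw [Complex.mul_conj, normSq_omega6]; norm_num

lemma omega6_ne_zero : omega6 ≠ 0 := by
  intro h
  have := normSq_omega6
  rw [h] at this
  simp at this

lemma abs_omega6 : ‖omega6‖ = 1 := by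
  rw [Complex.norm_def, normSq_omega6, Real.sqrt_one]

lemma omega6_sq : omega6 ^ 2 = omega6 - 1 := by
  have h3 : Real.sqrt 3 * Real.sqrt 3 = 3 := Real.mul_self_sqrt (by norm_num)
  apply Complex.ext
  · rw [pow_two, Complex.mul_re, omega6_re, omega6_im, Complex.sub_re, omega6_re,
      Complex.one_re]
    linear_combination -h3 / 4
  · rw [pow_two, Complex.mul_im, omega6_re, omega6_im, Complex.sub_im, omega6_im,
      Complex.one_im]
    ring

lemma omega6_cube : omega6 ^ 3 = -1 := by
  have h : omega6 ^ 3 = omega6 * omega6 ^ 2 := by ring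
  rw [h, omega6_sq, mul_sub, ← pow_two, omega6_sq]
  ring

lemma omega6_pow6 : omega6 ^ 6 = 1 := by
  have h : omega6 ^ 6 = (omega6 ^ 3) ^ 2 := by ring
  rw [h, omega6_cube]
  ring

lemma conj_omega6 : (starRingEnd ℂ) omega6 = omega6 ^ 5 :=
  calc (starRingEnd ℂ) omega6 = omega6 ^ 6 * (starRingEnd ℂ) omega6 := by
        rw [omega6_pow6, one_mul]
    _ = omega6 ^ 5 * (omega6 * (starRingEnd ℂ) omega6) := by ring
    _ = omega6 ^ 5 := by rw [omega6_mul_conj, mul_one]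

lemma abs_conj_omega6 : ‖(starRingEnd ℂ) omega6‖ = 1 := by
  rw [Complex.norm_conj, abs_omega6]

/-! ### Extremal lemma about sums of unit complex numbers -/

lemma eq_of_sum_unit {ι : Type*} (S : Finset ι) (w : ι → ℂ) (c : ℂ)
    (hw : ∀ e ∈ S, ‖w e‖ = 1) (hc : ‖c‖ = 1)
    (hsum : ∑ e ∈ S, w e = (S.card : ℂ) * c) : ∀ e ∈ S, w e = c := by
  have hcc : (starRingEnd ℂ) c * c = 1 := by
    rw [mul_comm, Complex.mul_conj, Complex.normSq_eq_norm_sq, hc]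
    norm_num
  have key : ∑ e ∈ S, (1 - ((starRingEnd ℂ) c * w e).re) = 0 := by
    rw [Finset.sum_sub_distrib, Finset.sum_const, nsmul_eq_mul, mul_one]
    have h1 : ∑ e ∈ S, ((starRingEnd ℂ) c * w e).re
        = ((starRingEnd ℂ) c * ∑ e ∈ S, w e).re := by
      rw [Finset.mul_sum, Complex.re_sum]
    rw [h1, hsum]
    have h2 : (starRingEnd ℂ) c * ((S.card : ℂ) * c) = (S.card : ℂ) := by
      calc (starRingEnd ℂ) c * ((S.card : ℂ) * c) = (S.card : ℂ) * ((starRingEnd ℂ) c * c) := by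
            ring
        _ = (S.card : ℂ) := by rw [hcc, mul_one]
    rw [h2, Complex.natCast_re, sub_self]
  have hnn : ∀ e ∈ S, 0 ≤ 1 - ((starRingEnd ℂ) c * w e).re := by
    intro e he
    have h1 : ((starRingEnd ℂ) c * w e).re ≤ ‖(starRingEnd ℂ) c * w e‖ :=
      Complex.re_le_norm _
    rw [norm_mul, Complex.norm_conj, hc, hw e he, one_mul] at h1
    linarith
  have hz := (Finset.sum_eq_zero_iff_of_nonneg hnn).mp key
  intro e he
  have h1 : ((starRingEnd ℂ) c * w e).re = 1 := by have := hz e he; linarith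
  have h2 : ‖(starRingEnd ℂ) c * w e‖ = 1 := by
    rw [norm_mul, Complex.norm_conj, hc, hw e he, one_mul]
  have h3 : (starRingEnd ℂ) c * w e = 1 := by
    have hsq := Complex.sq_norm ((starRingEnd ℂ) c * w e)
    rw [h2, Complex.normSq_apply, h1] at hsq
    have him : ((starRingEnd ℂ) c * w e).im = 0 := by nlinarith
    apply Complex.ext
    · rw [h1, Complex.one_re]
    · rw [him, Complex.one_im]
  calc w e = (c * (starRingEnd ℂ) c) * w e := by
        rw [Complex.mul_conj, Complex.normSq_eq_norm_sq, hc]; norm_num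
    _ = c * ((starRingEnd ℂ) c * w e) := by ring
    _ = c := by rw [h3, mul_one]

/-! ### Facts about `stepWeight` -/

section stepWeightFacts

variable {G : Multigraph V E}

lemma stepWeight_snd_irrel (M : MixedOrientation G) (e : E) (u v w : V) :
    stepWeight M e u v = stepWeight M e u w := rfl

lemma stepWeight_triv (e : E) (u v : V) : stepWeight G.triv e u v = 1 := rfl

lemma abs_stepWeight (M : MixedOrientation G) (e : E) (u v : V) :
    ‖stepWeight M e u v‖ = 1 := by
  unfold stepWeight
  rcases h : M.orient e with _ | ⟨a, b⟩
  · simp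
  · simp only
    split_ifs
    · exact abs_omega6
    · exact abs_conj_omega6

lemma stepWeight_exists_pow (M : MixedOrientation G) (e : E) (u v : V) :
    ∃ k : ℕ, stepWeight M e u v = omega6 ^ k := by
  unfold stepWeight
  rcases h : M.orient e with _ | ⟨a, b⟩
  · exact ⟨0, by simp⟩
  · simp only
    split_ifs
    · exact ⟨1, (pow_one _).symm⟩
    · exact ⟨5, conj_omega6⟩

lemma stepWeight_mul_rev (M : MixedOrientation G) {e : E} {u v : V}
    (h : G.ends e = s(u, v)) :
    stepWeight M e u v * stepWeight M e v u = 1 := by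
  have huv : u ≠ v := by
    rintro rfl
    exact G.loopless e (by rw [h]; exact Sym2.mk_isDiag_iff.2 rfl)
  unfold stepWeight
  rcases ho : M.orient e with _ | ⟨a, b⟩
  · simp
  · have hc := M.compat e a b ho
    have hab : s(a, b) = s(u, v) := hc.symm.trans h
    simp only
    rcases Sym2.eq_iff.mp hab with ⟨rfl, rfl⟩ | ⟨rfl, rfl⟩
    · rw [if_pos rfl, if_neg huv]
      exact omega6_mul_conj
    · rw [if_neg (Ne.symm huv), if_pos rfl, mul_comm]
      exact omega6_mul_conj

end stepWeightFacts

/-! ### Walks in a multigraph -/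

inductive GWalk (G : Multigraph V E) : V → V → Type _ where
  | nil (u : V) : GWalk G u u
  | cons {u v w : V} (e : E) (huv : G.ends e = s(u, v)) (p : GWalk G v w) : GWalk G u w

namespace GWalk

variable {G : Multigraph V E}

def length : ∀ {a b : V}, GWalk G a b → ℕ
  | _, _, .nil _ => 0
  | _, _, .cons _ _ p => p.length + 1

def weight (M : MixedOrientation G) : ∀ {a b : V}, GWalk G a b → ℂ
  | _, _, .nil _ => 1
  | _, _, .cons (u := u) (v := v) e _ p => stepWeight M e u v * weight M p

def vertAt : ∀ {a b : V}, GWalk G a b → ℕ → V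
  | a, _, .nil _, _ => a
  | a, _, .cons _ _ _, 0 => a
  | _, _, .cons _ _ p, k + 1 => vertAt p k

def edgeAt (d : E) : ∀ {a b : V}, GWalk G a b → ℕ → E
  | _, _, .nil _, _ => d
  | _, _, .cons e _ _, 0 => e
  | _, _, .cons _ _ p, k + 1 => edgeAt d p k

def append : ∀ {a b c : V}, GWalk G a b → GWalk G b c → GWalk G a c
  | _, _, _, .nil _, q => q
  | _, _, _, .cons e h p, q => .cons e h (append p q)

def reverse : ∀ {a b : V}, GWalk G a b → GWalk G b a
  | _, _, .nil u => .nil u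
  | _, _, .cons e h p => (reverse p).append (.cons e (h.trans (Sym2.eq_swap)) (.nil _))

def splitAt : ∀ {a b : V} (p : GWalk G a b) (k : ℕ),
    GWalk G a (p.vertAt k) × GWalk G (p.vertAt k) b
  | _, _, .nil u, _ => (.nil u, .nil u)
  | _, _, .cons e h p, 0 => (.nil _, .cons e h p)
  | _, _, .cons e h p, k + 1 => (.cons e h (splitAt p k).1, (splitAt p k).2)

def castL {a a' b : V} (h : a = a') (p : GWalk G a b) : GWalk G a' b := h ▸ p
def castR {a b b' : V} (h : b = b') (p : GWalk G a b) : GWalk G a b' := h ▸ p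

@[simp] lemma length_nil (u : V) : (nil u : GWalk G u u).length = 0 := rfl
@[simp] lemma length_cons {u v w : V} (e : E) (h : G.ends e = s(u, v)) (p : GWalk G v w) :
    (cons e h p).length = p.length + 1 := rfl

variable {M : MixedOrientation G}

@[simp] lemma weight_nil (u : V) : (nil u : GWalk G u u).weight M = 1 := rfl
@[simp] lemma weight_cons {u v w : V} (e : E) (h : G.ends e = s(u, v)) (p : GWalk G v w) :
    (cons e h p).weight M = stepWeight M e u v * p.weight M := rfl

@[simp] lemma vertAt_nil (u : V) (k : ℕ) : (nil u : GWalk G u u).vertAt k = u := rfl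
@[simp] lemma vertAt_cons_zero {u v w : V} (e : E) (h : G.ends e = s(u, v)) (p : GWalk G v w) :
    (cons e h p).vertAt 0 = u := rfl
@[simp] lemma vertAt_cons_succ {u v w : V} (e : E) (h : G.ends e = s(u, v)) (p : GWalk G v w)
    (k : ℕ) : (cons e h p).vertAt (k + 1) = p.vertAt k := rfl

@[simp] lemma edgeAt_nil (d : E) (u : V) (k : ℕ) : (nil u : GWalk G u u).edgeAt d k = d := rfl
@[simp] lemma edgeAt_cons_zero (d : E) {u v w : V} (e : E) (h : G.ends e = s(u, v))
    (p : GWalk G v w) : (cons e h p).edgeAt d 0 = e := rfl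
@[simp] lemma edgeAt_cons_succ (d : E) {u v w : V} (e : E) (h : G.ends e = s(u, v))
    (p : GWalk G v w) (k : ℕ) : (cons e h p).edgeAt d (k + 1) = p.edgeAt d k := rfl

lemma vertAt_zero {a b : V} (p : GWalk G a b) : p.vertAt 0 = a := by
  cases p <;> rfl

lemma vertAt_of_le {a b : V} (p : GWalk G a b) {k : ℕ} (h : p.length ≤ k) :
    p.vertAt k = b := by
  induction p generalizing k with
  | nil u => rfl
  | cons e he p ih =>
    cases k with
    | zero => simp [length] at h
    | succ k =>
      rw [vertAt_cons_succ]
      exact ih (by simpa [length] using h)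

lemma eq_of_length_zero {a b : V} (p : GWalk G a b) (h : p.length = 0) : a = b := by
  cases p with
  | nil => rfl
  | cons e he q => simp [length] at h

lemma ends_edgeAt (d : E) {a b : V} (p : GWalk G a b) {k : ℕ} (hk : k < p.length) :
    G.ends (p.edgeAt d k) = s(p.vertAt k, p.vertAt (k + 1)) := by
  induction p generalizing k with
  | nil u => simp [length] at hk
  | cons e he p ih =>
    cases k with
    | zero =>
      rw [edgeAt_cons_zero, vertAt_cons_zero, vertAt_cons_succ, vertAt_zero]
      exact he
    | succ k =>
      rw [edgeAt_cons_succ, vertAt_cons_succ, vertAt_cons_succ]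
      exact ih (by simpa [length] using hk)

lemma weight_eq_prod (M : MixedOrientation G) (d : E) (x : V) {a b : V} (p : GWalk G a b) :
    p.weight M = ∏ k ∈ Finset.range p.length,
      stepWeight M (p.edgeAt d k) (p.vertAt k) x := by
  induction p with
  | nil u => simp
  | @cons u v w e he p ih =>
    rw [length_cons, Finset.prod_range_succ']
    simp only [edgeAt_cons_succ, vertAt_cons_succ, edgeAt_cons_zero, vertAt_cons_zero]
    rw [weight_cons, ← ih]
    exact mul_comm _ _

lemma weight_append (M : MixedOrientation G) : ∀ {a b c : V} (p : GWalk G a b)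
    (q : GWalk G b c), (p.append q).weight M = p.weight M * q.weight M := by
  intro a b c p q
  induction p with
  | nil u => rw [weight_nil, one_mul]; rfl
  | @cons u v w e he p ih =>
    show stepWeight M e u v * (p.append q).weight M = _
    rw [ih, weight_cons, mul_assoc]

lemma length_append : ∀ {a b c : V} (p : GWalk G a b) (q : GWalk G b c),
    (p.append q).length = p.length + q.length := by
  intro a b c p q
  induction p with
  | nil u => rw [length_nil, Nat.zero_add]; rfl
  | @cons u v w e he p ih =>
    show (p.append q).length + 1 = p.length + 1 + q.length
    rw [ih]; omega

lemma weight_reverse_mul (M : MixedOrientation G) {a b : V} (p : GWalk G a b) :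
    p.reverse.weight M * p.weight M = 1 := by
  induction p with
  | nil u => simp [reverse]
  | @cons u v w e he p ih =>
    have h2 := stepWeight_mul_rev M he
    show ((reverse p).append (.cons e (he.trans (Sym2.eq_swap)) (.nil _))).weight M *
      (stepWeight M e u v * p.weight M) = 1
    rw [weight_append, weight_cons, weight_nil]
    linear_combination (stepWeight M e u v * stepWeight M e v u) * ih + h2

lemma exists_pow_weight (M : MixedOrientation G) {a b : V} (p : GWalk G a b) :
    ∃ k : ℕ, p.weight M = omega6 ^ k := by
  induction p with
  | nil u => exact ⟨0, by simp⟩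
  | @cons u v w e he p ih =>
    obtain ⟨k, hk⟩ := ih
    obtain ⟨m, hm⟩ := stepWeight_exists_pow M e u v
    exact ⟨m + k, by rw [weight_cons, hk, hm, pow_add]⟩

lemma weight_ne_zero (M : MixedOrientation G) {a b : V} (p : GWalk G a b) :
    p.weight M ≠ 0 := by
  obtain ⟨k, hk⟩ := exists_pow_weight M p
  rw [hk]
  exact pow_ne_zero _ omega6_ne_zero

@[simp] lemma weight_castL {a a' b : V} (h : a = a') (p : GWalk G a b) :
    (castL h p).weight M = p.weight M := by subst h; rfl
@[simp] lemma weight_castR {a b b' : V} (h : b = b') (p : GWalk G a b) :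
    (castR h p).weight M = p.weight M := by subst h; rfl
@[simp] lemma length_castL {a a' b : V} (h : a = a') (p : GWalk G a b) :
    (castL h p).length = p.length := by subst h; rfl
@[simp] lemma length_castR {a b b' : V} (h : b = b') (p : GWalk G a b) :
    (castR h p).length = p.length := by subst h; rfl

lemma splitAt_weight (M : MixedOrientation G) {a b : V} (p : GWalk G a b) (k : ℕ) :
    ((p.splitAt k).1).weight M * ((p.splitAt k).2).weight M = p.weight M := by
  induction p generalizing k with
  | nil u => simp [splitAt]
  | @cons u v w e he p ih =>
    cases k with
    | zero => simp [splitAt]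
    | succ k =>
      show (stepWeight M e u v * ((p.splitAt k).1).weight M) *
        ((p.splitAt k).2).weight M = stepWeight M e u v * p.weight M
      rw [mul_assoc, ih]

lemma splitAt_length_fst {a b : V} (p : GWalk G a b) (k : ℕ) (hk : k ≤ p.length) :
    (p.splitAt k).1.length = k := by
  induction p generalizing k with
  | nil u => simp [length] at hk; simp [splitAt, hk]
  | @cons u v w e he p ih =>
    cases k with
    | zero => rfl
    | succ k =>
      show ((p.splitAt k).1).length + 1 = k + 1
      rw [ih k (by simpa [length] using hk)]

lemma splitAt_length_snd {a b : V} (p : GWalk G a b) (k : ℕ) (hk : k ≤ p.length) :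
    (p.splitAt k).2.length = p.length - k := by
  induction p generalizing k with
  | nil u => simp [length] at hk; simp [splitAt, hk, length]
  | @cons u v w e he p ih =>
    cases k with
    | zero => rfl
    | succ k =>
      show ((p.splitAt k).2).length = p.length + 1 - (k + 1)
      rw [ih k (by simpa [length] using hk)]
      omega

lemma splitAt_fst_vertAt {a b : V} (p : GWalk G a b) (k j : ℕ) (hj : j ≤ k) :
    ((p.splitAt k).1).vertAt j = p.vertAt j := by
  induction p generalizing k j with
  | nil u => simp [splitAt]
  | @cons u v w e he p ih =>
    cases k with
    | zero =>
      interval_cases j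
      rfl
    | succ k =>
      cases j with
      | zero => rfl
      | succ j =>
        show ((p.splitAt k).1).vertAt j = p.vertAt j
        exact ih k j (by omega)

end GWalk

/-! ### Closed walks have weight one in a positive mixed multigraph -/

namespace GWalk

variable {G : Multigraph V E}

lemma zmod_val_inj {n : ℕ} [NeZero n] {i j : ZMod n} (h : i.val = j.val) : i = j := by
  have := ZMod.natCast_rightInverse (n := n)
  rw [← this i, ← this j, h]

lemma weight_simple (M : MixedOrientation G) (hpos : ∀ C : MixedCycle G, cycleWeight M C = 1)
    (u : V) (p : GWalk G u u) (d : E) (h2 : 2 ≤ p.length)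
    (hinj : ∀ i j : ℕ, i < j → j < p.length → p.vertAt i ≠ p.vertAt j) :
    p.weight M = 1 := by
  haveI : NeZero p.length := ⟨by omega⟩
  by_cases hE : p.length = 2 ∧ p.edgeAt d 0 = p.edgeAt d 1
  · obtain ⟨hl2, hee⟩ := hE
    rw [weight_eq_prod M d u, hl2, Finset.prod_range_succ, Finset.prod_range_one, ← hee]
    have hends : G.ends (p.edgeAt d 0) = s(p.vertAt 0, p.vertAt 1) :=
      ends_edgeAt d p (by omega)
    exact stepWeight_mul_rev M hends
  · -- injectivity of the vertex function on `ZMod p.length`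
    have hvinj : ∀ i j : ZMod p.length, p.vertAt i.val = p.vertAt j.val → i = j := by
      intro i j hv
      by_contra hne
      rcases lt_trichotomy i.val j.val with h | h | h
      · exact hinj i.val j.val h (ZMod.val_lt j) hv
      · exact hne (zmod_val_inj h)
      · exact hinj j.val i.val h (ZMod.val_lt i) hv.symm
    -- the extended vertex function is periodic at the endpoint
    have hvper : ∀ k : ℕ, k ≤ p.length → p.vertAt k = p.vertAt (k % p.length) := by
      intro k hk
      rcases Nat.lt_or_ge k p.length with h | h
      · rw [Nat.mod_eq_of_lt h]
      · have hk' : k = p.length := by omega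
        rw [hk', Nat.mod_self, vertAt_zero, vertAt_of_le p le_rfl]
    have hval1 : ∀ i : ZMod p.length, (i + 1).val = (i.val + 1) % p.length := by
      intro i
      rw [ZMod.val_add, ZMod.val_one_eq_one_mod]
      conv_rhs => rw [Nat.add_mod, Nat.mod_eq_of_lt (ZMod.val_lt i)]
    have hvert1 : ∀ i : ZMod p.length, p.vertAt ((i : ZMod p.length) + 1).val
        = p.vertAt (i.val + 1) := by
      intro i
      rw [hval1]
      exact (hvper (i.val + 1) (by have := ZMod.val_lt i; omega)).symm
    have hendsZ : ∀ i : ZMod p.length, G.ends (p.edgeAt d i.val)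
        = s(p.vertAt i.val, p.vertAt ((i + 1 : ZMod p.length)).val) := by
      intro i
      rw [hvert1]
      exact ends_edgeAt d p (ZMod.val_lt i)
    have heinj : ∀ i j : ZMod p.length, p.edgeAt d i.val = p.edgeAt d j.val → i = j := by
      intro i j he
      by_contra hne
      have h1 := hendsZ i
      have h2' := hendsZ j
      rw [he] at h1
      have hs := h1.symm.trans h2'
      rcases Sym2.eq_iff.mp hs with ⟨ha, hb⟩ | ⟨ha, hb⟩
      · exact hne (hvinj i j ha)
      · -- i = j + 1 and j = i + 1 in ZMod n, so n = 2
        have hij : i = j + 1 := hvinj i (j + 1) ha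
        have hji : j = i + 1 := hvinj j (i + 1) hb.symm
        have hii : i = i + 1 + 1 := by conv_lhs => rw [hij, hji]
        have h20 : (2 : ZMod p.length) = 0 := by linear_combination -hii
        have hdvd : p.length ∣ 2 := by
          have h2' : ((2 : ℕ) : ZMod p.length) = 0 := by exact_mod_cast h20
          exact (ZMod.natCast_eq_zero_iff 2 p.length).mp h2'
        have hl2 : p.length = 2 := by
          have := Nat.le_of_dvd (by norm_num) hdvd
          omega
        -- now i.val and j.val are 0 and 1 in some order
        have hiv := ZMod.val_lt i
        have hjv := ZMod.val_lt j
        have hvne : i.val ≠ j.val := fun h => hne (zmod_val_inj h)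
        apply hE
        refine ⟨hl2, ?_⟩
        rcases Nat.lt_or_ge i.val 1 with hi0 | hi1
        · have hi0' : i.val = 0 := by omega
          have hj1 : j.val = 1 := by omega
          rw [hi0', hj1] at he
          exact he
        · have hi1' : i.val = 1 := by omega
          have hj0 : j.val = 0 := by omega
          rw [hi1', hj0] at he
          exact he.symm
    set C : MixedCycle G := {
      n := p.length
      two_le := h2
      vert := fun i => p.vertAt i.val
      edge := fun i => p.edgeAt d i.val
      vert_inj := fun i j h => hvinj i j h
      edge_inj := fun i j h => heinj i j h
      ends_eq := fun i => hendsZ i } with hC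
    have hc := hpos C
    have heq : cycleWeight M C = p.weight M := by
      show (∏ i : ZMod p.length,
        stepWeight M (p.edgeAt d i.val) (p.vertAt i.val) (C.vert (i + 1))) = p.weight M
      rw [weight_eq_prod M d u]
      refine Finset.prod_bij' (fun (i : ZMod p.length) _ => i.val)
        (fun k _ => (k : ZMod p.length)) (fun i _ => Finset.mem_range.mpr (ZMod.val_lt i))
        (fun k _ => Finset.mem_univ _) (fun i _ => ZMod.natCast_rightInverse i)
        (fun k hk => ZMod.val_cast_of_lt (Finset.mem_range.mp hk)) ?_
      intro i _
      rfl
    rw [← heq, hc]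

lemma weight_closed (M : MixedOrientation G)
    (hpos : ∀ C : MixedCycle G, cycleWeight M C = 1) :
    ∀ (n : ℕ) (u : V) (p : GWalk G u u), p.length ≤ n → p.weight M = 1 := by
  intro n
  induction n using Nat.strong_induction_on with
  | _ n IH =>
    intro u p hlen
    rcases Nat.eq_zero_or_pos p.length with h0 | h1
    · cases p with
      | nil => rfl
      | cons e he q => simp [length] at h0
    · by_cases hinj : ∀ i j : ℕ, i < j → j < p.length → p.vertAt i ≠ p.vertAt j
      · -- no repeated vertices: it is a cycle (or degenerate)
        cases p with
        | nil => rfl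
        | @cons u' v w' e he q =>
          rcases Nat.lt_or_ge (cons e he q).length 2 with hl | hl
          · -- length 1 : a loop, contradiction
            have hq0 : q.length = 0 := by
              have := length_cons e he q; omega
            have hvu : v = u := eq_of_length_zero q hq0
            have hdiag : (G.ends e).IsDiag := by
              rw [he, hvu]; exact Sym2.mk_isDiag_iff.2 rfl
            exact absurd hdiag (G.loopless e)
          · exact weight_simple M hpos u (cons e he q) e hl hinj
      · push_neg at hinj
        obtain ⟨i, j, hij, hjl, hv⟩ := hinj
        set L := (p.splitAt j).1 with hLdef
        set R := (p.splitAt j).2 with hRdef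
        have hw : L.weight M * R.weight M = p.weight M := splitAt_weight M p j
        have hLlen : L.length = j := splitAt_length_fst p j (le_of_lt hjl)
        have hRlen : R.length = p.length - j := splitAt_length_snd p j (le_of_lt hjl)
        set L1 := (L.splitAt i).1 with hL1def
        set L2 := (L.splitAt i).2 with hL2def
        have hwL : L1.weight M * L2.weight M = L.weight M := splitAt_weight M L i
        have hL1len : L1.length = i := splitAt_length_fst L i (by omega)
        have hL2len : L2.length = j - i := by
          rw [hL2def, splitAt_length_snd L i (by omega), hLlen]
        have hvi : L.vertAt i = p.vertAt i := splitAt_fst_vertAt p j i (le_of_lt hij)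
        have h₁ : L.vertAt i = p.vertAt j := hvi.trans hv
        set C1 : GWalk G (p.vertAt j) (p.vertAt j) := castL h₁ L2 with hC1
        set C2 : GWalk G u u := (castR h₁ L1).append R with hC2
        have e1 : C1.weight M = 1 := by
          apply IH (j - i) (by omega)
          rw [hC1, length_castL, hL2len]
        have e2 : C2.weight M = 1 := by
          apply IH (i + (p.length - j)) (by omega)
          rw [hC2, length_append, length_castR, hL1len, hRlen]
        have hfinal : p.weight M = C2.weight M * C1.weight M := by
          rw [hC2, hC1, weight_append, weight_castR, weight_castL, ← hw, ← hwL]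
          ring
        rw [hfinal, e1, e2, mul_one]

lemma of_reachIn {u v : V} (h : ReachIn G Set.univ u v) : Nonempty (GWalk G u v) := by
  induction h with
  | refl => exact ⟨.nil _⟩
  | tail hab hbc ih =>
    obtain ⟨e, -, he⟩ := hbc
    obtain ⟨p⟩ := ih
    exact ⟨p.append (.cons e he (.nil _))⟩

end GWalk

/-- Corollary cosunder: a connected mixed multigraph can be obtained from
its underlying graph by a three-way switching iff it is positive (every mixed cycle has
weight `1`). -/
theorem switching_from_underlying_iff_positive [Fintype V] [Fintype E] {G : Multigraph V E}
    (hconn : G.Connected) (M : MixedOrientation G) :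
    Switching G.triv M ↔ ∀ C : MixedCycle G, cycleWeight M C = 1 := by
  constructor
  · rintro ⟨dd, hd6, hEq⟩ C
    haveI : NeZero C.n := ⟨by have := C.two_le; omega⟩
    have habs : ∀ v, ‖dd v‖ = 1 := by
      intro v
      obtain ⟨i, -, hi⟩ := hd6 v
      rw [hi, norm_pow, abs_omega6, one_pow]
    have hne : ∀ v, dd v ≠ 0 := by
      intro v h
      have := habs v
      rw [h] at this
      simp at this
    have hDD : Matrix.diagonal dd * (Matrix.diagonal dd)⁻¹ = 1 := by
      apply Matrix.mul_nonsing_inv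
      rw [Matrix.det_diagonal]
      exact isUnit_iff_ne_zero.2 (Finset.prod_ne_zero_iff.2 fun v _ => hne v)
    have hENT : ∀ u v, dd u * herm M u v = herm G.triv u v * dd v := by
      intro u v
      have hM : Matrix.diagonal dd * herm M = herm G.triv * Matrix.diagonal dd := by
        rw [hEq, ← Matrix.mul_assoc, ← Matrix.mul_assoc, hDD, Matrix.one_mul]
      calc dd u * herm M u v = (Matrix.diagonal dd * herm M) u v :=
            (Matrix.diagonal_mul dd (herm M) u v).symm
        _ = (herm G.triv * Matrix.diagonal dd) u v := by rw [hM]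
        _ = herm G.triv u v * dd v := Matrix.mul_diagonal dd (herm G.triv) u v
    have hstep : ∀ i : ZMod C.n, stepWeight M (C.edge i) (C.vert i) (C.vert (i + 1))
        = (dd (C.vert i))⁻¹ * dd (C.vert (i + 1)) := by
      intro i
      set u := C.vert i with hu
      set v := C.vert (i + 1) with hv
      have hends := C.ends_eq i
      set S : Finset E := Finset.univ.filter (fun e => G.ends e = s(u, v)) with hS
      have htrivuv : herm G.triv u v = (S.card : ℂ) := by
        show (∑ e : E, if G.ends e = s(u, v) then stepWeight G.triv e u v else 0) = _
        rw [Finset.sum_congr rfl (fun e _ => by rw [stepWeight_triv])]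
        rw [Finset.sum_boole, hS]
      have hMuv : herm M u v = ∑ e ∈ S, stepWeight M e u v := by
        show (∑ e : E, if G.ends e = s(u, v) then stepWeight M e u v else 0) = _
        rw [hS]
        exact (Finset.sum_filter _ _).symm
      have hsum : ∑ e ∈ S, stepWeight M e u v = (S.card : ℂ) * ((dd u)⁻¹ * dd v) := by
        have h := hENT u v
        rw [hMuv, htrivuv] at h
        have h2 : dd u * (∑ e ∈ S, stepWeight M e u v)
            = dd u * ((S.card : ℂ) * ((dd u)⁻¹ * dd v)) := by
          rw [h, mul_comm ((S.card : ℂ)) ((dd u)⁻¹ * dd v), ← mul_assoc, ← mul_assoc,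
            mul_inv_cancel₀ (hne u), one_mul, mul_comm]
        exact mul_left_cancel₀ (hne u) h2
      have he0 : C.edge i ∈ S := by
        rw [hS]
        simp [hends, hu, hv]
      have habsc : ‖(dd u)⁻¹ * dd v‖ = 1 := by
        rw [norm_mul, norm_inv, habs, habs]
        norm_num
      exact eq_of_sum_unit S _ _ (fun e _ => abs_stepWeight M e u v) habsc hsum
        (C.edge i) he0
    show (∏ i : ZMod C.n, stepWeight M (C.edge i) (C.vert i) (C.vert (i + 1))) = 1
    rw [Finset.prod_congr rfl (fun i _ => hstep i), Finset.prod_mul_distrib]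
    have hshift : (∏ i : ZMod C.n, dd (C.vert (i + 1))) = ∏ i : ZMod C.n, dd (C.vert i) :=
      Equiv.prod_comp (Equiv.addRight (1 : ZMod C.n)) (fun i => dd (C.vert i))
    rw [hshift, ← Finset.prod_mul_distrib]
    rw [Finset.prod_congr rfl (fun i _ => inv_mul_cancel₀ (hne (C.vert i)))]
    exact Finset.prod_const_one
  · intro hpos
    rcases isEmpty_or_nonempty V with hV | hV
    · refine ⟨fun _ => 1, fun v => isEmptyElim v, ?_⟩
      have h1 : (Matrix.diagonal (fun _ => (1:ℂ)) : Matrix V V ℂ) = 1 := Matrix.diagonal_one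
      rw [h1, inv_one, Matrix.one_mul, Matrix.mul_one]
      ext u v
      exact isEmptyElim u
    · set v₀ : V := Classical.arbitrary V with hv₀
      have hwalk : ∀ v, Nonempty (GWalk G v₀ v) := fun v => GWalk.of_reachIn (hconn v₀ v)
      set wTo : ∀ v, GWalk G v₀ v := fun v => (hwalk v).some with hwTo
      set dd : V → ℂ := fun v => (wTo v).weight M with hdd
      have huniq : ∀ v (p : GWalk G v₀ v), p.weight M = dd v := by
        intro v p
        have h1 : (p.append (wTo v).reverse).weight M = 1 :=
          GWalk.weight_closed M hpos (p.append (wTo v).reverse).length v₀ _ le_rfl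
        rw [GWalk.weight_append] at h1
        have h2 := GWalk.weight_reverse_mul M (wTo v)
        calc p.weight M
            = p.weight M * ((wTo v).reverse.weight M * (wTo v).weight M) := by
              rw [h2, mul_one]
          _ = (p.weight M * (wTo v).reverse.weight M) * (wTo v).weight M := by ring
          _ = dd v := by rw [h1, one_mul]
      have hstep : ∀ (e : E) (u v : V), G.ends e = s(u, v) →
          stepWeight M e u v * dd u = dd v := by
        intro e u v h
        have h1 := huniq v ((wTo u).append (.cons e h (.nil v)))
        rw [GWalk.weight_append, GWalk.weight_cons, GWalk.weight_nil] at h1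
        calc stepWeight M e u v * dd u
            = (wTo u).weight M * (stepWeight M e u v * 1) := by
              rw [mul_one]; ring
          _ = dd v := h1
      have hne : ∀ v, dd v ≠ 0 := fun v => GWalk.weight_ne_zero M (wTo v)
      refine ⟨dd, ?_, ?_⟩
      · intro v
        obtain ⟨k, hk⟩ := GWalk.exists_pow_weight M (wTo v)
        refine ⟨k % 6, by omega, ?_⟩
        show (wTo v).weight M = _
        rw [hk]
        conv_lhs => rw [← Nat.div_add_mod k 6]
        rw [pow_add, pow_mul, omega6_pow6, one_pow, one_mul]
      · have hinv : (Matrix.diagonal dd)⁻¹ = Matrix.diagonal (fun v => (dd v)⁻¹) := by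
          apply Matrix.inv_eq_left_inv
          rw [Matrix.diagonal_mul_diagonal]
          have hfun : (fun v => (dd v)⁻¹ * dd v) = fun _ => (1:ℂ) :=
            funext fun v => inv_mul_cancel₀ (hne v)
          rw [hfun, Matrix.diagonal_one]
        rw [hinv]
        ext u v
        rw [Matrix.mul_diagonal, Matrix.diagonal_mul]
        show (∑ e : E, if G.ends e = s(u, v) then stepWeight M e u v else 0)
          = (dd u)⁻¹ * (∑ e : E, if G.ends e = s(u, v) then stepWeight G.triv e u v else 0)
            * dd v
        rw [Finset.mul_sum, Finset.sum_mul]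
        refine Finset.sum_congr rfl fun e _ => ?_
        by_cases hc : G.ends e = s(u, v)
        · rw [if_pos hc, if_pos hc, stepWeight_triv]
          have h := hstep e u v hc
          have hval : stepWeight M e u v = dd v * (dd u)⁻¹ := by
            rw [← h, mul_comm (stepWeight M e u v) (dd u), mul_assoc,
              mul_comm (stepWeight M e u v) ((dd u)⁻¹), ← mul_assoc,
              mul_inv_cancel₀ (hne u), one_mul]
          rw [hval]
          ring
        · rw [if_neg hc, if_neg hc]
          ring

end
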